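/- Let M = {0,…,L} with the partial monoid structure given by addition, undefined when the sum exceeds L, and let N_•M be its nerve, with N_nM = {(x_1,…,x_n) : Σx_i ≤ L}. Define s_{n+1}^n(x_1,…,x_n) = (x_1,…,x_n, L − Σx_i) and τ^n(x_1,…,x_n) = (x_2,…,x_n, L − Σx_i). Then each τ^n is a bijection satisfying (τ^n)^{n+1} = id, and the paracyclic relations d_i ∘ τ^n = τ^{n−1} ∘ d_{i+1} for i < n and d_n ∘ τ^n = d_0 hold; i.e., the structure is cyclic. -/

import Mathlib

/- The nerve of the partial monoid `M = {0,…,L}` with addition, undefined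
when the sum exceeds `L`: `N_m M = {(x_1,…,x_m) : Σ x_i ≤ L}`, encoded as
functions `Fin m → ℕ` (entry `x_{j+1}` at index `j`) with `Σ x ≤ L`. -/

/-- The cyclic operator `τ (x_1,…,x_m) = (x_2,…,x_m, L − Σ x_i)` at level
`m = n+1`. -/
def tauL (L n : ℕ) (x : Fin (n + 1) → ℕ) (j : Fin (n + 1)) : ℕ :=
  if h : j.val = n then L - (∑ i, x i) else x ⟨j.val + 1, by have := j.isLt; omega⟩

/-- The face maps at level `m = n+2`: `d_0` deletes `x_1`, `d_{n+2}` deletes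
`x_{n+2}`, and `d_i` for `0 < i < n+2` replaces `(x_i, x_{i+1})` by
`x_i + x_{i+1}`. -/
def dmapL (n : ℕ) (i : Fin (n + 3)) (x : Fin (n + 2) → ℕ) (j : Fin (n + 1)) : ℕ :=
  if i.val = 0 then x ⟨j.val + 1, by have := j.isLt; omega⟩
  else if h2 : i.val = n + 2 then x ⟨j.val, by have := j.isLt; omega⟩
  else if j.val + 1 < i.val then x ⟨j.val, by have := j.isLt; omega⟩
  else if j.val + 1 = i.val then
    x ⟨i.val - 1, by have := i.isLt; omega⟩ + x ⟨i.val, by have := i.isLt; omega⟩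
  else x ⟨j.val + 1, by have := j.isLt; omega⟩


set_option maxHeartbeats 1000000

lemma single_le_sum' {m : ℕ} (x : Fin m → ℕ) (j : Fin m) : x j ≤ ∑ i, x i :=
  Finset.single_le_sum (fun _ _ => Nat.zero_le _) (Finset.mem_univ j)

lemma sum_tauL (L m : ℕ) (x : Fin (m + 1) → ℕ) (h : ∑ i, x i ≤ L) :
    ∑ j, tauL L m x j = L - x 0 := by
  rw [Fin.sum_univ_castSucc]
  have h1 : tauL L m x (Fin.last m) = L - ∑ i, x i := by simp [tauL, Fin.last]
  have h2 : ∀ j : Fin m, tauL L m x (Fin.castSucc j) = x j.succ := by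
    intro j
    have : (Fin.castSucc j).val ≠ m := by have := j.isLt; simp [Fin.castSucc]; omega
    simp only [tauL, dif_neg this]; rfl
  simp only [h1, h2]
  have h3 : ∑ i, x i = x 0 + ∑ j : Fin m, x j.succ := Fin.sum_univ_succ x
  have h4 := single_le_sum' x 0
  omega

/-- The inverse of `tauL`. -/
def tauInvL (L m : ℕ) (y : Fin (m + 1) → ℕ) (j : Fin (m + 1)) : ℕ :=
  if j.val = 0 then L - ∑ i, y i else y ⟨j.val - 1, by have := j.isLt; omega⟩

lemma sum_tauInvL (L m : ℕ) (y : Fin (m + 1) → ℕ) (h : ∑ i, y i ≤ L) :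
    ∑ j, tauInvL L m y j = L - y (Fin.last m) := by
  rw [Fin.sum_univ_succ]
  have h1 : tauInvL L m y 0 = L - ∑ i, y i := by simp [tauInvL]
  have h2 : ∀ j : Fin m, tauInvL L m y j.succ = y (Fin.castSucc j) := by
    intro j
    have : (j.succ).val ≠ 0 := by simp
    simp only [tauInvL, if_neg this]
    congr 1
  simp only [h1, h2]
  have h3 : ∑ i, y i = (∑ j : Fin m, y (Fin.castSucc j)) + y (Fin.last m) :=
    Fin.sum_univ_castSucc y
  have h4 := single_le_sum' y (Fin.last m)
  omega

lemma tau_mapsTo (L m : ℕ) :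
    Set.MapsTo (tauL L m) {x : Fin (m+1) → ℕ | ∑ i, x i ≤ L} {x | ∑ i, x i ≤ L} := by
  intro x hx
  simp only [Set.mem_setOf_eq] at *
  rw [sum_tauL L m x hx]; omega

lemma tauInv_mapsTo (L m : ℕ) :
    Set.MapsTo (tauInvL L m) {x : Fin (m+1) → ℕ | ∑ i, x i ≤ L} {x | ∑ i, x i ≤ L} := by
  intro x hx
  simp only [Set.mem_setOf_eq] at *
  rw [sum_tauInvL L m x hx]; omega

lemma tau_invOn (L m : ℕ) :
    Set.InvOn (tauInvL L m) (tauL L m)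
      {x : Fin (m+1) → ℕ | ∑ i, x i ≤ L} {x | ∑ i, x i ≤ L} := by
  constructor
  · intro x hx
    simp only [Set.mem_setOf_eq] at hx
    funext j
    simp only [tauInvL, sum_tauL L m x hx]
    by_cases h0 : j.val = 0
    · rw [if_pos h0]
      have := single_le_sum' x 0
      have hj : j = 0 := Fin.ext h0
      rw [hj]; omega
    · rw [if_neg h0]
      have hne : (⟨j.val - 1, by have := j.isLt; omega⟩ : Fin (m+1)).val ≠ m := by
        simp only []; have := j.isLt; omega
      simp only [tauL, dif_neg hne]
      congr 1
      exact Fin.ext (by simp; have := j.isLt; omega)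
  · intro y hy
    simp only [Set.mem_setOf_eq] at hy
    funext j
    simp only [tauL, sum_tauInvL L m y hy]
    by_cases hm : j.val = m
    · rw [dif_pos hm]
      have := single_le_sum' y (Fin.last m)
      have hj : j = Fin.last m := Fin.ext hm
      rw [hj]; omega
    · rw [dif_neg hm]
      have hne : (⟨j.val + 1, by have := j.isLt; omega⟩ : Fin (m+1)).val ≠ 0 := by simp
      simp only [tauInvL, if_neg hne]
      congr 1

lemma tau_bijOn (L m : ℕ) :
    Set.BijOn (tauL L m) {x : Fin (m+1) → ℕ | ∑ i, x i ≤ L} {x | ∑ i, x i ≤ L} :=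
  (tau_invOn L m).bijOn (tau_mapsTo L m) (tauInv_mapsTo L m)

/-- extension of `x` to level `m+2` with total sum `L`. -/
def extL (L m : ℕ) (x : Fin (m + 1) → ℕ) (j : Fin (m + 2)) : ℕ :=
  if h : j.val < m + 1 then x ⟨j.val, h⟩ else L - ∑ i, x i

/-- cyclic rotation. -/
def rotL (m : ℕ) (X : Fin (m + 1) → ℕ) (j : Fin (m + 1)) : ℕ := X (j + 1)

lemma ext_inj (L m : ℕ) (x y : Fin (m + 1) → ℕ) (h : extL L m x = extL L m y) :
    x = y := by
  funext j
  have := congrFun h ⟨j.val, by have := j.isLt; omega⟩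
  simp only [extL, dif_pos j.isLt] at this
  convert this

lemma ext_tau (L m : ℕ) (x : Fin (m + 1) → ℕ) (h : ∑ i, x i ≤ L) :
    extL L m (tauL L m x) = rotL (m + 1) (extL L m x) := by
  have hs : ∑ i, tauL L m x i = L - x 0 := sum_tauL L m x h
  funext j
  simp only [extL, rotL]
  by_cases hj : j.val < m + 1
  · rw [dif_pos hj]
    by_cases hm : j.val = m
    · have hadd : (j + 1).val = m + 1 := by simp [Fin.add_def, hm]
      rw [dif_neg (by omega)]
      simp only [tauL]
      rw [dif_pos hm]
    · have hadd : (j + 1).val = j.val + 1 := by simp [Fin.add_def]; omega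
      rw [dif_pos (by omega : (j+1).val < m + 1)]
      simp only [tauL]
      rw [dif_neg hm]
      congr 1
      exact Fin.ext (by simp [hadd])
  · rw [dif_neg hj]
    have hv : j.val = m + 1 := by have := j.isLt; omega
    have hadd : (j + 1).val = 0 := by simp [Fin.add_def, hv]
    rw [dif_pos (by omega : (j+1).val < m + 1), hs]
    have h0 := single_le_sum' x 0
    have hx : x ⟨(j+1).val, by omega⟩ = x 0 := by congr 1; exact Fin.ext (by simp [hadd])
    omega

open Fin.NatCast in
lemma rot_iter (m k : ℕ) (X : Fin (m + 1) → ℕ) :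
    (rotL m)^[k] X = fun j => X (j + (k : Fin (m + 1))) := by
  induction k with
  | zero => simp
  | succ k ih =>
    rw [Function.iterate_succ_apply', ih]
    funext j
    simp only [rotL]
    congr 1
    push_cast
    ac_rfl

lemma tau_iter_ext (L m k : ℕ) (x : Fin (m + 1) → ℕ) (h : ∑ i, x i ≤ L) :
    extL L m ((tauL L m)^[k] x) = (rotL (m + 1))^[k] (extL L m x) ∧
      ∑ i, (tauL L m)^[k] x i ≤ L := by
  induction k with
  | zero => exact ⟨rfl, h⟩
  | succ k ih =>
    rw [Function.iterate_succ_apply', Function.iterate_succ_apply']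
    refine ⟨?_, ?_⟩
    · rw [ext_tau L m _ ih.2, ih.1]
    · rw [sum_tauL L m _ ih.2]; omega

open Fin.NatCast in
lemma tau_iter_id (L n : ℕ) (x : Fin (n + 1) → ℕ) (h : ∑ i, x i ≤ L) :
    (tauL L n)^[n + 2] x = x := by
  apply ext_inj L n
  rw [(tau_iter_ext L n (n + 2) x h).1, rot_iter]
  funext j
  have : ((n + 2 : ℕ) : Fin (n + 2)) = 0 := by
    simp [Fin.natCast_self]
  rw [this, add_zero]

lemma sum_dmap_mid (n : ℕ) (i : Fin (n + 3)) (h1 : 1 ≤ i.val) (h2 : i.val ≤ n + 1)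
    (x : Fin (n + 2) → ℕ) : ∑ j, dmapL n i x j = ∑ j, x j := by
  set p := i.val with hp
  set f : ℕ → ℕ := fun j => if h : j < n + 2 then x ⟨j, h⟩ else 0 with hf
  have hL : ∑ j, dmapL n i x j =
      ∑ j ∈ Finset.range (n + 1),
        (if j + 1 < p then f j else if j + 1 = p then f (p - 1) + f p else f (j + 1)) := by
    rw [← Fin.sum_univ_eq_sum_range]
    apply Finset.sum_congr rfl
    intro j _
    have hj := j.isLt
    simp only [dmapL, hf]
    rw [if_neg (by omega), dif_neg (by omega)]
    by_cases c1 : j.val + 1 < p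
    · rw [if_pos c1, if_pos c1, dif_pos (by omega)]
    · rw [if_neg c1, if_neg c1]
      by_cases c2 : j.val + 1 = p
      · rw [if_pos c2, if_pos c2, dif_pos (by omega), dif_pos (by omega)]
      · rw [if_neg c2, if_neg c2, dif_pos (by omega)]
  have hR : ∑ j, x j = ∑ j ∈ Finset.range (n + 2), f j := by
    rw [← Fin.sum_univ_eq_sum_range]
    apply Finset.sum_congr rfl
    intro j _
    simp only [hf, dif_pos j.isLt]
  rw [hL, hR]
  rw [Finset.range_eq_Ico,
    ← Finset.sum_Ico_consecutive _ (by omega : 0 ≤ p - 1) (by omega : p - 1 ≤ n + 1)]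
  have e1 : ∑ j ∈ Finset.Ico 0 (p - 1),
      (if j + 1 < p then f j else if j + 1 = p then f (p - 1) + f p else f (j + 1))
      = ∑ j ∈ Finset.Ico 0 (p - 1), f j := by
    apply Finset.sum_congr rfl
    intro j hj
    simp only [Finset.mem_Ico] at hj
    rw [if_pos (by omega)]
  rw [e1, Finset.sum_eq_sum_Ico_succ_bot (by omega : p - 1 < n + 1)]
  have hpp : p - 1 + 1 = p := by omega
  rw [if_neg (by omega), if_pos (by omega)]
  have e2 : ∑ j ∈ Finset.Ico (p - 1 + 1) (n + 1),
      (if j + 1 < p then f j else if j + 1 = p then f (p - 1) + f p else f (j + 1))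
      = ∑ j ∈ Finset.Ico (p + 1) (n + 2), f j := by
    rw [Finset.sum_Ico_eq_sum_range, Finset.sum_Ico_eq_sum_range]
    apply Finset.sum_congr (by congr 1 <;> omega)
    intro j _
    rw [if_neg (by omega), if_neg (by omega)]
    congr 1
    omega
  rw [e2]
  rw [Finset.range_eq_Ico, ← Finset.sum_Ico_consecutive _ (by omega : 0 ≤ p - 1) (by omega : p - 1 ≤ n + 2),
    Finset.sum_eq_sum_Ico_succ_bot (by omega : p - 1 < n + 2) f,
    Finset.sum_eq_sum_Ico_succ_bot (by omega : p - 1 + 1 < n + 2) f, hpp]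
  ring

lemma sum_dmap_last (n : ℕ) (x : Fin (n + 2) → ℕ) :
    ∑ j, dmapL n (Fin.last (n + 2)) x j = ∑ j, x j - x (Fin.last (n + 1)) := by
  have h1 : ∀ j : Fin (n + 1), dmapL n (Fin.last (n + 2)) x j = x (Fin.castSucc j) := by
    intro j
    simp only [dmapL, Fin.last]
    rw [if_neg (by omega)]
    simp
    rfl
  simp only [h1]
  rw [Fin.sum_univ_castSucc x]
  omega

lemma face_rel_mid (L n : ℕ) (i : Fin (n + 3)) (x : Fin (n + 2) → ℕ)
    (hx : ∑ k, x k ≤ L) (hp : i.val ≤ n) :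
    dmapL n i (tauL L (n + 1) x) = tauL L n (dmapL n (i + 1) x) := by
  have hi1 : (i + 1).val = i.val + 1 := by simp [Fin.add_def]; omega
  have hs : ∑ k, dmapL n (i + 1) x k = ∑ k, x k :=
    sum_dmap_mid n (i + 1) (by omega) (by omega) x
  have hxeq : ∀ (a b : ℕ) (ha : a < n + 2) (hb : b < n + 2), a = b →
      x ⟨a, ha⟩ = x ⟨b, hb⟩ := fun a b ha hb h => by subst h; rfl
  have h0 := single_le_sum' x 0
  funext j
  have hj := j.isLt
  have hxx : ∑ k : Fin (n + 1 + 1), x k = ∑ k : Fin (n + 2), x k := rfl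
  simp only [tauL, dmapL] at hs ⊢
  rw [hs]
  split_ifs <;>
    first
      | rfl
      | omega
      | (exact hxeq _ _ _ _ (by omega))
      | (exact congrArg₂ (·+·) (hxeq _ _ _ _ (by omega)) (hxeq _ _ _ _ (by omega)))

lemma face_rel_top (L n : ℕ) (i : Fin (n + 3)) (x : Fin (n + 2) → ℕ)
    (hx : ∑ k, x k ≤ L) (hC : i.val = n + 1) :
    dmapL n i (tauL L (n + 1) x) = tauL L n (dmapL n (i + 1) x) := by
  have hi1 : (i + 1).val = i.val + 1 := by simp [Fin.add_def]; omega
  have hilast : i + 1 = Fin.last (n + 2) := Fin.ext (by rw [hi1, hC]; rfl)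
  have hs : ∑ k, dmapL n (i + 1) x k = ∑ k, x k - x (Fin.last (n + 1)) := by
    rw [hilast]; exact sum_dmap_last n x
  have hlast := single_le_sum' x (Fin.last (n + 1))
  have hxeq : ∀ (a b : ℕ) (ha : a < n + 2) (hb : b < n + 2), a = b →
      x ⟨a, ha⟩ = x ⟨b, hb⟩ := fun a b ha hb h => by subst h; rfl
  have hxl : ∀ h' : i.val - 1 + 1 < n + 2, x ⟨i.val - 1 + 1, h'⟩ = x (Fin.last (n + 1)) :=
    fun h' => hxeq _ _ _ _ (by omega)
  have hxx : ∑ k : Fin (n + 1 + 1), x k = ∑ k : Fin (n + 2), x k := rfl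
  funext j
  have hj := j.isLt
  simp only [tauL, dmapL] at hs ⊢
  rw [hs]
  split_ifs <;>
    first
      | rfl
      | omega
      | (exact hxeq _ _ _ _ (by omega))
      | (rw [hxl]; omega)

lemma face_rel_last (L n : ℕ) (x : Fin (n + 2) → ℕ) :
    dmapL n (Fin.last (n + 2)) (tauL L (n + 1) x) = dmapL n 0 x := by
  funext j
  have hj := j.isLt
  simp only [tauL, dmapL, Fin.last, Fin.val_zero]
  split_ifs <;> first | rfl | omega | simp_all

/-- For `M = {0,…,L}` with partial addition, the operators `τ` on the nerve
are bijections of `N_m M = {x : Σ x ≤ L}` with `τ^{m+1} = id`, and the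
paracyclic face relations `d_i ∘ τ = τ ∘ d_{i+1}` (`i < m`) and
`d_m ∘ τ = d_0` hold; i.e. the structure is cyclic. -/
theorem bounded_sum_nerve_cyclic (L n : ℕ) :
    Set.BijOn (tauL L n) {x | ∑ i, x i ≤ L} {x | ∑ i, x i ≤ L} ∧
    (∀ x : Fin (n + 1) → ℕ, (∑ i, x i) ≤ L → (tauL L n)^[n + 2] x = x) ∧
    (∀ i : Fin (n + 3), i.val < n + 2 → ∀ x : Fin (n + 2) → ℕ, (∑ k, x k) ≤ L →
      dmapL n i (tauL L (n + 1) x) = tauL L n (dmapL n (i + 1) x)) ∧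
    (∀ x : Fin (n + 2) → ℕ, (∑ k, x k) ≤ L →
      dmapL n (Fin.last (n + 2)) (tauL L (n + 1) x) = dmapL n 0 x) := by
  refine ⟨tau_bijOn L n, fun x hx => tau_iter_id L n x hx, ?_, fun x _ => face_rel_last L n x⟩
  intro i hi x hx
  by_cases hp : i.val ≤ n
  · exact face_rel_mid L n i x hx hp
  · exact face_rel_top L n i x hx (by omega)
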